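/- arXiv:2107.13309 — 4 statements merged into one kernel-verified Lean document; each statement's English description precedes it below -/
import Mathlib

section
/- Let H be a family of pairwise independent hash functions h : U → [2^λ] (i.e., for h chosen uniformly from H, any two distinct inputs are mapped independently and uniformly). Let S ⊆ U with |S| = s ≥ 1, and assume λ ≥ ⌈log₂ s⌉ + 1. Set t = λ − ⌈log₂ s⌉ − 1. Then for a fixed element d ∈ S, the probability (over uniform h ∈ H) that h(d) ∈ [2^t] and h(d') ∉ [2^t] for all d' ∈ S \ {d} is at least 1/(8s). -/
/-- For a pairwise independent family of hash functions `h : U → [2^lam]`, a set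
`S ⊆ U` of size `s ≥ 1`, `lam ≥ ⌈log₂ s⌉ + 1` and `t = lam − ⌈log₂ s⌉ − 1`, the
probability (over a uniform member of the family) that a fixed `d ∈ S` hashes into
`[2^t]` while no other element of `S` does is at least `1/(8s)`. -/
theorem stmt3 {U H : Type*} [Fintype H] [Nonempty H] [DecidableEq U]
    (lam : ℕ) (f : H → U → ℕ) (s : ℕ) (S : Finset U)
    (hcard : S.card = s) (hs : 1 ≤ s)
    (hlam : Nat.clog 2 s + 1 ≤ lam)
    (hrange : ∀ h x, f h x ∈ Finset.Icc 1 (2 ^ lam))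
    (huniform : ∀ x : U, ∀ z ∈ Finset.Icc 1 (2 ^ lam),
      (Finset.univ.filter fun h : H => f h x = z).card * 2 ^ lam = Fintype.card H)
    (hpair : ∀ x₁ x₂ : U, x₁ ≠ x₂ → ∀ z₁ ∈ Finset.Icc 1 (2 ^ lam), ∀ z₂ ∈ Finset.Icc 1 (2 ^ lam),
      (Finset.univ.filter fun h : H => f h x₁ = z₁ ∧ f h x₂ = z₂).card * (2 ^ lam) ^ 2
        = Fintype.card H)
    (d : U) (hd : d ∈ S) :
    (1 : ℝ) / (8 * s) ≤
      ((Finset.univ.filter fun h : H =>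
          f h d ∈ Finset.Icc 1 (2 ^ (lam - (Nat.clog 2 s + 1))) ∧
          ∀ d' ∈ S.erase d, f h d' ∉ Finset.Icc 1 (2 ^ (lam - (Nat.clog 2 s + 1)))).card : ℝ)
        / (Fintype.card H : ℝ) := by
  classical
  set c := Nat.clog 2 s with hc
  set t := lam - (c + 1) with ht
  set T := 2 ^ t with hTdef
  set M := 2 ^ lam with hMdef
  set N := Fintype.card H with hNdef
  have hts : t + (c + 1) = lam := Nat.sub_add_cancel hlam
  have hMT : M = T * 2 ^ (c + 1) := by rw [hMdef, hTdef, ← pow_add, hts]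
  have hTpos : 0 < T := Nat.pow_pos (by norm_num)
  have hMpos : 0 < M := Nat.pow_pos (by norm_num)
  have hNpos : 0 < N := Fintype.card_pos
  have hsle : s ≤ 2 ^ c := Nat.le_pow_clog (by norm_num) s
  have hclt : 2 ^ c < 2 * s := by
    rcases eq_or_lt_of_le hs with h1 | h1
    · simp [hc, ← h1]
    · have h := Nat.pow_pred_clog_lt_self (by norm_num : 1 < 2) h1
      have hcpos : 0 < Nat.clog 2 s := Nat.clog_pos (by norm_num) h1
      rw [Nat.pred_eq_sub_one] at h
      calc 2 ^ Nat.clog 2 s = 2 * 2 ^ (Nat.clog 2 s - 1) := by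
            rw [← pow_succ']; congr 1; omega
        _ < 2 * s := by omega
  have h2s : 2 * s * T ≤ M := by
    rw [hMT, pow_succ]
    nlinarith [hsle, hTpos]
  have h4s : M ≤ 4 * s * T := by
    rw [hMT, pow_succ]
    nlinarith [hclt, hTpos]
  have hTM : T ≤ M := by
    rw [hMT]; exact Nat.le_mul_of_pos_right _ (Nat.pow_pos (by norm_num))
  have hIccSub : Finset.Icc 1 T ⊆ Finset.Icc 1 M := Finset.Icc_subset_Icc_right hTM
  -- Step 1: probability that d hashes into [T]
  have hA : (Finset.univ.filter fun h : H => f h d ∈ Finset.Icc 1 T).card * M = T * N := by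
    have heq : (Finset.univ.filter fun h : H => f h d ∈ Finset.Icc 1 T)
        = (Finset.Icc 1 T).biUnion (fun z => Finset.univ.filter fun h => f h d = z) := by
      ext h
      simp only [Finset.mem_filter, Finset.mem_univ, true_and, Finset.mem_biUnion]
      exact ⟨fun hm => ⟨f h d, hm, rfl⟩, fun ⟨z, hz, he⟩ => he ▸ hz⟩
    rw [heq, Finset.card_biUnion, Finset.sum_mul]
    · rw [Finset.sum_congr rfl (fun z hz => huniform d z (hIccSub hz))]
      simp [Nat.Icc_eq_range', mul_comm]
    · intro z₁ _ z₂ _ hne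
      simp only [Finset.disjoint_left, Finset.mem_filter, Finset.mem_univ, true_and]
      intro h h1 h2
      exact hne (h1 ▸ h2 ▸ rfl)
  -- Step 2: pairwise probability
  have hB : ∀ d' ∈ S.erase d,
      (Finset.univ.filter fun h : H =>
        f h d ∈ Finset.Icc 1 T ∧ f h d' ∈ Finset.Icc 1 T).card * M ^ 2 = T ^ 2 * N := by
    intro d' hd'
    have hne : d ≠ d' := (Finset.ne_of_mem_erase hd').symm
    have heq : (Finset.univ.filter fun h : H =>
          f h d ∈ Finset.Icc 1 T ∧ f h d' ∈ Finset.Icc 1 T)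
        = ((Finset.Icc 1 T) ×ˢ (Finset.Icc 1 T)).biUnion
            (fun z => Finset.univ.filter fun h => f h d = z.1 ∧ f h d' = z.2) := by
      ext h
      simp only [Finset.mem_filter, Finset.mem_univ, true_and, Finset.mem_biUnion,
        Finset.mem_product]
      constructor
      · rintro ⟨h1, h2⟩; exact ⟨(f h d, f h d'), ⟨h1, h2⟩, rfl, rfl⟩
      · rintro ⟨z, ⟨hz1, hz2⟩, he1, he2⟩; exact ⟨he1 ▸ hz1, he2 ▸ hz2⟩
    rw [heq, Finset.card_biUnion, Finset.sum_mul]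
    · rw [Finset.sum_congr rfl (fun z hz => by
        have hz' := Finset.mem_product.mp hz
        exact hpair d d' hne z.1 (hIccSub hz'.1) z.2 (hIccSub hz'.2))]
      rw [Finset.sum_const, Finset.card_product, Nat.card_Icc]
      simp [sq]
    · intro z₁ _ z₂ _ hne'
      simp only [Finset.disjoint_left, Finset.mem_filter, Finset.mem_univ, true_and]
      rintro h ⟨h1, h2⟩ ⟨h3, h4⟩
      exact hne' (Prod.ext (h1 ▸ h3 ▸ rfl) (h2 ▸ h4 ▸ rfl))
  -- Step 3: union bound
  set G := (Finset.univ.filter fun h : H =>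
      f h d ∈ Finset.Icc 1 T ∧
      ∀ d' ∈ S.erase d, f h d' ∉ Finset.Icc 1 T) with hGdef
  have hsub : (Finset.univ.filter fun h : H => f h d ∈ Finset.Icc 1 T)
      ⊆ G ∪ (S.erase d).biUnion (fun d' => Finset.univ.filter fun h : H =>
          f h d ∈ Finset.Icc 1 T ∧ f h d' ∈ Finset.Icc 1 T) := by
    intro h hh
    simp only [Finset.mem_filter, Finset.mem_univ, true_and] at hh
    by_cases hbad : ∀ d' ∈ S.erase d, f h d' ∉ Finset.Icc 1 T
    · exact Finset.mem_union_left _ (Finset.mem_filter.mpr ⟨Finset.mem_univ _, hh, hbad⟩)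
    · push_neg at hbad
      obtain ⟨d', hd', hmem⟩ := hbad
      refine Finset.mem_union_right _ ?_
      simp only [Finset.mem_biUnion, Finset.mem_filter, Finset.mem_univ, true_and]
      exact ⟨d', hd', hh, hmem⟩
  have hcount : (Finset.univ.filter fun h : H => f h d ∈ Finset.Icc 1 T).card
      ≤ G.card + ∑ d' ∈ S.erase d, (Finset.univ.filter fun h : H =>
          f h d ∈ Finset.Icc 1 T ∧ f h d' ∈ Finset.Icc 1 T).card := by
    calc _ ≤ (G ∪ (S.erase d).biUnion _).card := Finset.card_le_card hsub
      _ ≤ G.card + ((S.erase d).biUnion _).card := Finset.card_union_le _ _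
      _ ≤ _ := Nat.add_le_add_left (Finset.card_biUnion_le) _
  -- move to ℝ
  have hcardE : (S.erase d).card = s - 1 := by rw [Finset.card_erase_of_mem hd, hcard]
  have hAR : ((Finset.univ.filter fun h : H => f h d ∈ Finset.Icc 1 T).card : ℝ) * M
      = T * N := by exact_mod_cast congrArg (Nat.cast : ℕ → ℝ) hA
  have hBR : ∀ d' ∈ S.erase d, ((Finset.univ.filter fun h : H =>
      f h d ∈ Finset.Icc 1 T ∧ f h d' ∈ Finset.Icc 1 T).card : ℝ) * (M:ℝ) ^ 2
      = (T:ℝ) ^ 2 * N := by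
    intro d' hd'
    exact_mod_cast congrArg (Nat.cast : ℕ → ℝ) (hB d' hd')
  have hMR : (0:ℝ) < M := by exact_mod_cast hMpos
  have hNR : (0:ℝ) < N := by exact_mod_cast hNpos
  have hTR : (0:ℝ) < T := by exact_mod_cast hTpos
  have hsR : (1:ℝ) ≤ s := by exact_mod_cast hs
  have h2sR : 2 * (s:ℝ) * T ≤ M := by exact_mod_cast h2s
  have h4sR : (M:ℝ) ≤ 4 * s * T := by exact_mod_cast h4s
  -- lower bound for G.card * M^2
  have hGlow : (T:ℝ) * N * M - (s - 1) * (T ^ 2 * N) ≤ (G.card : ℝ) * M ^ 2 := by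
    have hcR : ((Finset.univ.filter fun h : H => f h d ∈ Finset.Icc 1 T).card : ℝ)
        ≤ (G.card : ℝ) + ∑ d' ∈ S.erase d, ((Finset.univ.filter fun h : H =>
            f h d ∈ Finset.Icc 1 T ∧ f h d' ∈ Finset.Icc 1 T).card : ℝ) := by
      exact_mod_cast hcount
    have hsum : (∑ d' ∈ S.erase d, ((Finset.univ.filter fun h : H =>
        f h d ∈ Finset.Icc 1 T ∧ f h d' ∈ Finset.Icc 1 T).card : ℝ)) * M ^ 2
        = (s - 1) * (T ^ 2 * N) := by
      rw [Finset.sum_mul, Finset.sum_congr rfl hBR, Finset.sum_const, hcardE, nsmul_eq_mul]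
      have : ((s - 1 : ℕ) : ℝ) = (s : ℝ) - 1 := by
        push_cast [Nat.cast_sub hs]; ring
      rw [this]
    have hmul := mul_le_mul_of_nonneg_right hcR (le_of_lt (pow_pos hMR 2))
    rw [add_mul, hsum] at hmul
    have hAM : ((Finset.univ.filter fun h : H => f h d ∈ Finset.Icc 1 T).card : ℝ) * M ^ 2
        = T * N * M := by
      rw [sq, ← mul_assoc, hAR]
    rw [hAM] at hmul
    linarith
  -- final arithmetic
  rw [div_le_div_iff₀ (by positivity) hNR]
  have hMsq : (0:ℝ) < (M:ℝ)^2 := pow_pos hMR 2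
  rw [← mul_le_mul_iff_left₀ hMsq]
  nlinarith [mul_nonneg (mul_nonneg (sub_nonneg.mpr h2sR) hTR.le) hNR.le,
    mul_nonneg (mul_nonneg (sub_nonneg.mpr h4sR) hMR.le) hNR.le,
    mul_pos hTR hNR, mul_pos hMR hNR, mul_pos (mul_pos hTR hNR) hMR,
    mul_nonneg (mul_nonneg (sub_nonneg.mpr h2sR) (mul_nonneg hTR.le hNR.le)) (sub_nonneg.mpr hsR)]
end

section
/- Let H be a family of pairwise independent hash functions h : U → [2^λ], let S ⊆ U with |S| = s ≥ 1, and λ ≥ ⌈log₂ s⌉ + 1, and set t = λ − ⌈log₂ s⌉ − 1. Then the probability (over uniform h ∈ H) that exactly one element of S is hashed into the set [2^t] is at least 1/8. -/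
/-- For a pairwise independent family of hash functions `h : U → [2^lam]`, a set
`S ⊆ U` of size `s ≥ 1`, `lam ≥ ⌈log₂ s⌉ + 1` and `t = lam − ⌈log₂ s⌉ − 1`, the
probability that exactly one element of `S` hashes into `[2^t]` is at least `1/8`. -/
theorem stmt4 {U H : Type*} [Fintype H] [Nonempty H] [DecidableEq U]
    (lam : ℕ) (f : H → U → ℕ) (s : ℕ) (S : Finset U)
    (hcard : S.card = s) (hs : 1 ≤ s)
    (hlam : Nat.clog 2 s + 1 ≤ lam)
    (hrange : ∀ h x, f h x ∈ Finset.Icc 1 (2 ^ lam))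
    (huniform : ∀ x : U, ∀ z ∈ Finset.Icc 1 (2 ^ lam),
      (Finset.univ.filter fun h : H => f h x = z).card * 2 ^ lam = Fintype.card H)
    (hpair : ∀ x₁ x₂ : U, x₁ ≠ x₂ → ∀ z₁ ∈ Finset.Icc 1 (2 ^ lam), ∀ z₂ ∈ Finset.Icc 1 (2 ^ lam),
      (Finset.univ.filter fun h : H => f h x₁ = z₁ ∧ f h x₂ = z₂).card * (2 ^ lam) ^ 2
        = Fintype.card H) :
    (1 : ℝ) / 8 ≤
      ((Finset.univ.filter fun h : H =>
          (S.filter fun d => f h d ∈ Finset.Icc 1 (2 ^ (lam - (Nat.clog 2 s + 1)))).card = 1).card : ℝ)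
        / (Fintype.card H : ℝ) := by
  classical
  set c := Nat.clog 2 s with hc
  set q := 2 ^ (lam - (c + 1)) with hq
  set N := Fintype.card H with hN
  have hNpos : (0:ℝ) < N := by exact_mod_cast Fintype.card_pos
  have hpow : q * 2 ^ (c + 1) = 2 ^ lam := by
    rw [hq, ← pow_add, Nat.sub_add_cancel hlam]
  have hqle : q ≤ 2 ^ lam := by
    calc q ≤ q * 2 ^ (c + 1) := Nat.le_mul_of_pos_right _ (by positivity)
      _ = 2 ^ lam := hpow
  set T := Finset.Icc 1 q with hT
  have hsub : T ⊆ Finset.Icc 1 (2 ^ lam) := Finset.Icc_subset_Icc le_rfl hqle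
  have hTcard : T.card = q := by rw [hT, Nat.card_Icc]; simp
  -- single-point count
  have hA : ∀ x : U, (Finset.univ.filter fun h : H => f h x ∈ T).card * 2 ^ lam = q * N := by
    intro x
    have hfib : (Finset.univ.filter fun h : H => f h x ∈ T).card
        = ∑ z ∈ T, ((Finset.univ.filter fun h : H => f h x ∈ T).filter fun h => f h x = z).card :=
      Finset.card_eq_sum_card_fiberwise (fun h hh => (Finset.mem_filter.mp hh).2)
    rw [hfib, Finset.sum_mul]
    have hterm : ∀ z ∈ T,
        ((Finset.univ.filter fun h : H => f h x ∈ T).filter fun h => f h x = z).card * 2 ^ lam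
          = N := by
      intro z hz
      rw [Finset.filter_filter]
      have heq : (Finset.univ.filter fun h : H => f h x ∈ T ∧ f h x = z)
          = Finset.univ.filter fun h : H => f h x = z := by
        apply Finset.filter_congr
        intro h _
        exact ⟨fun h2 => h2.2, fun h2 => ⟨h2 ▸ hz, h2⟩⟩
      rw [heq]
      exact huniform x z (hsub hz)
    rw [Finset.sum_congr rfl hterm, Finset.sum_const, smul_eq_mul, hTcard]
  -- pairwise count
  have hAB : ∀ x y : U, x ≠ y →
      (Finset.univ.filter fun h : H => f h x ∈ T ∧ f h y ∈ T).card * (2 ^ lam) ^ 2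
        = q ^ 2 * N := by
    intro x y hxy
    have hfib : (Finset.univ.filter fun h : H => f h x ∈ T ∧ f h y ∈ T).card
        = ∑ z ∈ T ×ˢ T, ((Finset.univ.filter fun h : H => f h x ∈ T ∧ f h y ∈ T).filter
            fun h => (f h x, f h y) = z).card := by
      refine Finset.card_eq_sum_card_fiberwise ?_
      intro h hh
      simp only [Finset.mem_coe, Finset.mem_product] at hh ⊢
      exact ⟨(Finset.mem_filter.mp hh).2.1, (Finset.mem_filter.mp hh).2.2⟩
    rw [hfib, Finset.sum_mul]
    have hterm : ∀ z ∈ T ×ˢ T,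
        ((Finset.univ.filter fun h : H => f h x ∈ T ∧ f h y ∈ T).filter
            fun h => (f h x, f h y) = z).card * (2 ^ lam) ^ 2 = N := by
      intro z hz
      rw [Finset.mem_product] at hz
      rw [Finset.filter_filter]
      have heq : (Finset.univ.filter fun h : H => (f h x ∈ T ∧ f h y ∈ T) ∧ (f h x, f h y) = z)
          = Finset.univ.filter fun h : H => f h x = z.1 ∧ f h y = z.2 := by
        apply Finset.filter_congr
        intro h _
        rw [Prod.ext_iff]
        constructor
        · exact fun h2 => h2.2
        · rintro ⟨h1, h2⟩
          exact ⟨⟨h1 ▸ hz.1, h2 ▸ hz.2⟩, h1, h2⟩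
      rw [heq]
      exact hpair x y hxy z.1 (hsub hz.1) z.2 (hsub hz.2)
    rw [Finset.sum_congr rfl hterm, Finset.sum_const, smul_eq_mul, Finset.card_product, hTcard]
    ring
  -- cast to ℝ
  have hpowpos : (0:ℝ) < (2:ℝ) ^ lam := by positivity
  have hAr : ∀ x : U, ((Finset.univ.filter fun h : H => f h x ∈ T).card : ℝ)
      = q * N / 2 ^ lam := by
    intro x
    have := hA x
    field_simp
    exact_mod_cast this
  have hABr : ∀ x y : U, x ≠ y →
      ((Finset.univ.filter fun h : H => f h x ∈ T ∧ f h y ∈ T).card : ℝ)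
        = q ^ 2 * N / (2 ^ lam) ^ 2 := by
    intro x y hxy
    have := hAB x y hxy
    field_simp
    exact_mod_cast this
  -- decomposition of the event
  set B : U → Finset H := fun d => Finset.univ.filter fun h : H =>
    (S.filter fun x => f h x ∈ T) = {d} with hB
  set E := Finset.univ.filter fun h : H => (S.filter fun d => f h d ∈ T).card = 1 with hE
  have hEB : E = S.biUnion B := by
    ext h
    simp only [hE, hB, Finset.mem_filter, Finset.mem_biUnion, Finset.mem_univ, true_and]
    constructor
    · intro h1
      obtain ⟨d, hd⟩ := Finset.card_eq_one.mp h1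
      refine ⟨d, ?_, hd⟩
      have hdmem : d ∈ S.filter fun x => f h x ∈ T := by
        rw [hd]; exact Finset.mem_singleton_self d
      exact (Finset.mem_filter.mp hdmem).1
    · rintro ⟨d, _, hd⟩
      rw [hd]
      exact Finset.card_singleton d
  have hdisj : ∀ x ∈ S, ∀ y ∈ S, x ≠ y → Disjoint (B x) (B y) := by
    intro x _ y _ hxy
    rw [Finset.disjoint_left]
    intro h hhx hhy
    simp only [hB, Finset.mem_filter, Finset.mem_univ, true_and] at hhx hhy
    exact hxy (Finset.singleton_injective (hhx ▸ hhy))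
  have hcardE : E.card = ∑ d ∈ S, (B d).card := by
    rw [hEB]; exact Finset.card_biUnion hdisj
  -- lower bound each B d
  have hBd : ∀ d ∈ S, (q * N / 2 ^ lam - (s - 1) * (q ^ 2 * N / (2 ^ lam) ^ 2) : ℝ)
      ≤ ((B d).card : ℝ) := by
    intro d hd
    set C : Finset H := (S.erase d).biUnion fun e =>
      Finset.univ.filter fun h : H => f h d ∈ T ∧ f h e ∈ T with hC
    have hBeq : B d = (Finset.univ.filter fun h : H => f h d ∈ T) \ C := by
      ext h
      constructor
      · intro hh
        have hfeq : (S.filter fun x => f h x ∈ T) = {d} := by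
          simp only [hB, Finset.mem_filter, Finset.mem_univ, true_and] at hh
          exact hh
        have hdT : f h d ∈ T := by
          have hdmem : d ∈ S.filter fun x => f h x ∈ T := by
            rw [hfeq]; exact Finset.mem_singleton_self d
          exact (Finset.mem_filter.mp hdmem).2
        rw [Finset.mem_sdiff]
        refine ⟨Finset.mem_filter.mpr ⟨Finset.mem_univ h, hdT⟩, ?_⟩
        intro hcon
        rw [hC, Finset.mem_biUnion] at hcon
        obtain ⟨e, heE, hmem⟩ := hcon
        obtain ⟨hne, heS⟩ := Finset.mem_erase.mp heE
        have heT : f h e ∈ T := (Finset.mem_filter.mp hmem).2.2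
        have hesing : e ∈ ({d} : Finset U) := by
          rw [← hfeq]; exact Finset.mem_filter.mpr ⟨heS, heT⟩
        exact hne (Finset.mem_singleton.mp hesing)
      · intro hh
        rw [Finset.mem_sdiff] at hh
        obtain ⟨hA', hnC⟩ := hh
        have hdT : f h d ∈ T := (Finset.mem_filter.mp hA').2
        simp only [hB, Finset.mem_filter, Finset.mem_univ, true_and]
        ext x
        rw [Finset.mem_filter, Finset.mem_singleton]
        constructor
        · rintro ⟨hxS, hxT⟩
          by_contra hxd
          apply hnC
          rw [hC, Finset.mem_biUnion]
          exact ⟨x, Finset.mem_erase.mpr ⟨hxd, hxS⟩,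
            Finset.mem_filter.mpr ⟨Finset.mem_univ h, hdT, hxT⟩⟩
        · rintro rfl
          exact ⟨hd, hdT⟩
    have hCsub : C ⊆ Finset.univ.filter fun h : H => f h d ∈ T := by
      intro h hh
      rw [hC, Finset.mem_biUnion] at hh
      obtain ⟨e, _, he⟩ := hh
      simp only [Finset.mem_filter, Finset.mem_univ, true_and] at he ⊢
      exact he.1
    have hCle : (C.card : ℝ) ≤ (s - 1) * (q ^ 2 * N / (2 ^ lam) ^ 2) := by
      have h1 : C.card ≤ ∑ e ∈ S.erase d,
          (Finset.univ.filter fun h : H => f h d ∈ T ∧ f h e ∈ T).card :=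
        Finset.card_biUnion_le
      have h2 : ((∑ e ∈ S.erase d,
          (Finset.univ.filter fun h : H => f h d ∈ T ∧ f h e ∈ T).card : ℕ) : ℝ)
          = (s - 1) * (q ^ 2 * N / (2 ^ lam) ^ 2) := by
        push_cast
        rw [Finset.sum_congr rfl (fun e he => hABr d e (Finset.ne_of_mem_erase he).symm)]
        rw [Finset.sum_const, nsmul_eq_mul, Finset.card_erase_of_mem hd, hcard]
        have : ((s - 1 : ℕ) : ℝ) = (s : ℝ) - 1 := by
          push_cast [hs]; ring
        rw [this]
      calc (C.card : ℝ) ≤ _ := by exact_mod_cast h1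
        _ = _ := h2
    rw [hBeq]
    rw [Finset.card_sdiff, Finset.inter_eq_left.mpr hCsub]
    have hCA : C.card ≤ (Finset.univ.filter fun h : H => f h d ∈ T).card :=
      Finset.card_le_card hCsub
    rw [Nat.cast_sub hCA, hAr d]
    linarith [hCle]
  -- sum up
  have hEr : (s : ℝ) * (q * N / 2 ^ lam) - s * ((s - 1) * (q ^ 2 * N / (2 ^ lam) ^ 2))
      ≤ (E.card : ℝ) := by
    have : (E.card : ℝ) = ∑ d ∈ S, ((B d).card : ℝ) := by
      rw [hcardE]; push_cast; ring
    rw [this]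
    calc (s : ℝ) * (q * N / 2 ^ lam) - s * ((s - 1) * (q ^ 2 * N / (2 ^ lam) ^ 2))
        = ∑ _d ∈ S, ((q * N / 2 ^ lam) - (s - 1) * (q ^ 2 * N / (2 ^ lam) ^ 2) : ℝ) := by
          rw [Finset.sum_const, nsmul_eq_mul, hcard]; ring
      _ ≤ ∑ d ∈ S, ((B d).card : ℝ) := Finset.sum_le_sum hBd
  -- numeric bounds
  have hsle : (s : ℝ) ≤ 2 ^ c := by exact_mod_cast Nat.le_pow_clog one_lt_two s
  have hclt : (2 : ℝ) ^ c < 2 * s := by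
    rcases eq_or_lt_of_le hs with h1 | h1
    · have hc0 : c = 0 := by rw [hc, ← h1]; simp
      rw [hc0, ← h1]; norm_num
    · have hcpos : 0 < c := Nat.clog_pos one_lt_two h1
      have := Nat.pow_pred_clog_lt_self one_lt_two h1
      have h2 : (2:ℕ) ^ (c - 1) < s := this
      have h3 : (2:ℕ) ^ c < 2 * s := by
        have : (2:ℕ) ^ c = 2 * 2 ^ (c - 1) := by
          rw [← pow_succ']
          congr 1
          omega
        omega
      exact_mod_cast h3
  have hqr : (q : ℝ) * 2 ^ (c + 1) = 2 ^ lam := by exact_mod_cast hpow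
  -- final arithmetic
  have hq0 : 0 < q := by rw [hq]; positivity
  have hqr0 : (0:ℝ) < (q:ℝ) := by exact_mod_cast hq0
  have hqne : ((q:ℝ)) ≠ 0 := ne_of_gt hqr0
  have hP : (0:ℝ) < 2 ^ (c + 1) := by positivity
  have hs' : (1:ℝ) ≤ (s:ℝ) := by exact_mod_cast hs
  have e1 : (q:ℝ) * N / 2 ^ lam = (N:ℝ) / 2 ^ (c + 1) := by
    rw [← hqr, mul_div_mul_left _ _ hqne]
  have e2 : (q:ℝ) ^ 2 * N / (2 ^ lam) ^ 2 = (N:ℝ) / (2 ^ (c + 1)) ^ 2 := by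
    rw [← hqr, mul_pow, mul_div_mul_left _ _ (pow_ne_zero 2 hqne)]
  have h2s : 2 * (s:ℝ) ≤ 2 ^ (c + 1) := by
    rw [pow_succ, mul_comm]; linarith [hsle]
  have h4s : (2:ℝ) ^ (c + 1) < 4 * s := by
    rw [pow_succ, mul_comm]; linarith [hclt]
  have hkey0 : ((2:ℝ) ^ (c + 1)) ^ 2 / 8 ≤ (s:ℝ) * 2 ^ (c + 1) - s * (s - 1) := by
    nlinarith [mul_nonneg (by linarith : (0:ℝ) ≤ 2 ^ (c+1) - 2 * s)
      (by linarith : (0:ℝ) ≤ 4 * s - 2 ^ (c+1)), hs', hP]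
  have hkey : (1:ℝ) / 8 ≤ (s:ℝ) / 2 ^ (c + 1) - s * (s - 1) / (2 ^ (c + 1)) ^ 2 := by
    have heq1 : (1:ℝ) / 8 = (((2:ℝ) ^ (c + 1)) ^ 2 / 8) / ((2 ^ (c + 1)) ^ 2) := by
      field_simp
    have heq2 : (s:ℝ) / 2 ^ (c + 1) - s * (s - 1) / (2 ^ (c + 1)) ^ 2
        = ((s:ℝ) * 2 ^ (c + 1) - s * (s - 1)) / ((2 ^ (c + 1)) ^ 2) := by
      field_simp
    rw [heq1, heq2]
    gcongr
  rw [le_div_iff₀ hNpos]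
  have h5 : ((s:ℝ) / 2 ^ (c + 1) - s * (s - 1) / (2 ^ (c + 1)) ^ 2) * N
      = (s:ℝ) * ((q:ℝ) * N / 2 ^ lam) - s * (((s:ℝ) - 1) * ((q:ℝ) ^ 2 * N / (2 ^ lam) ^ 2)) := by
    rw [e1, e2]; ring
  have h4 := mul_le_mul_of_nonneg_right hkey (le_of_lt hNpos)
  rw [h5] at h4
  linarith [hEr, h4]
end

section
/- Let G = (V, E, ω) be a weighted undirected graph, S ⊆ V, and 0 < ζ' be a real parameter. Suppose distance estimates d̂ satisfy: d̂(s) = 0 for s ∈ S, and for each vertex v and each round p, d̂ is updated so that if u* is v's neighbor on a shortest (p+1)-bounded path to S with d̂(u*) ≤ (1+ζ')^p d^{(p)}_G(u*, S), then the new estimate d̂(v) is at most (1+ζ') · (d̂(u*) + ω(u*, v)) and is always at least some true bounded distance to S. Then after p rounds, for every vertex v: d^{(p)}_G(v, S) ≤ d̂(v) ≤ (1 + ζ')^p · d^{(p)}_G(v, S). -/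
open scoped ENNReal

/-- The weight of a walk: the sum of the weights of its edges (darts). -/
def walkWeight {V : Type*} (w : V → V → ℝ) {G : SimpleGraph V} {u v : V}
    (p : G.Walk u v) : ℝ :=
  (p.darts.map fun d => w d.toProd.1 d.toProd.2).sum

/-- The `t`-bounded distance from `v` to a set `S`. -/
noncomputable def setBddDist {V : Type*} (G : SimpleGraph V) (w : V → V → ℝ)
    (S : Set V) (t : ℕ) (v : V) : ℝ≥0∞ :=
  ⨅ (s : V) (_ : s ∈ S) (p : G.Walk v s) (_ : p.length ≤ t),
    ENNReal.ofReal (walkWeight w p)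

section Aux

variable {V : Type*} [Fintype V] [DecidableEq V] {G : SimpleGraph V}

lemma walkWeight_cons (w : V → V → ℝ) {a b c : V} (h : G.Adj a b) (q : G.Walk b c) :
    walkWeight w (SimpleGraph.Walk.cons h q) = w a b + walkWeight w q := by
  simp [walkWeight]

lemma walkWeight_nonneg (w : V → V → ℝ) (hpos : ∀ a b, G.Adj a b → 0 < w a b)
    {a b : V} (q : G.Walk a b) : 0 ≤ walkWeight w q := by
  induction q with
  | nil => simp [walkWeight]
  | cons h q ih => rw [walkWeight_cons]; exact add_nonneg (hpos _ _ h).le ih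

lemma setBddDist_le (w : V → V → ℝ) (S : Set V) {t : ℕ} {v s : V} (hs : s ∈ S)
    (q : G.Walk v s) (hq : q.length ≤ t) :
    setBddDist G w S t v ≤ ENNReal.ofReal (walkWeight w q) :=
  iInf₂_le_of_le s hs (iInf₂_le q hq)

lemma setBddDist_exists_min (w : V → V → ℝ) (S : Set V) {t : ℕ} {v : V}
    (h : setBddDist G w S t v ≠ ⊤) :
    ∃ s ∈ S, ∃ q : G.Walk v s, q.length ≤ t ∧
      ENNReal.ofReal (walkWeight w q) = setBddDist G w S t v := by
  classical
  set ι := Σ s : {s : V // s ∈ S}, {q : G.Walk v s.1 // q.length < t + 1} with hι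
  haveI : Finite ι := by
    haveI : Finite {s : V // s ∈ S} := Subtype.finite
    infer_instance
  have hrw : setBddDist G w S t v = ⨅ x : ι, ENNReal.ofReal (walkWeight w x.2.1) := by
    apply le_antisymm
    · exact le_iInf fun x => setBddDist_le w S x.1.2 x.2.1 (Nat.lt_succ_iff.mp x.2.2)
    · refine le_iInf₂ fun s hs => le_iInf₂ fun q hq => ?_
      exact iInf_le _ (⟨⟨s, hs⟩, ⟨q, Nat.lt_succ_iff.mpr hq⟩⟩ : ι)
  haveI : Nonempty ι := by
    by_contra hne
    rw [not_nonempty_iff] at hne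
    rw [hrw, iInf_of_empty] at h
    exact h rfl
  obtain ⟨x, hx⟩ := Finite.exists_min (fun x : ι => ENNReal.ofReal (walkWeight w x.2.1))
  refine ⟨x.1.1, x.1.2, x.2.1, Nat.lt_succ_iff.mp x.2.2, ?_⟩
  rw [hrw]
  exact le_antisymm (le_iInf hx) (iInf_le _ x)

lemma setBddDist_le_add (w : V → V → ℝ) (S : Set V) {t : ℕ} {v u : V} (h : G.Adj v u) :
    setBddDist G w S (t + 1) v ≤ ENNReal.ofReal (w v u) + setBddDist G w S t u := by
  conv_rhs => rw [setBddDist]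
  simp only [ENNReal.add_iInf]
  refine le_iInf₂ fun s hs => le_iInf₂ fun q hq => ?_
  calc setBddDist G w S (t + 1) v
      ≤ ENNReal.ofReal (walkWeight w (SimpleGraph.Walk.cons h q)) :=
        setBddDist_le w S hs _ (by simpa using Nat.succ_le_succ hq)
    _ = ENNReal.ofReal (w v u + walkWeight w q) := by rw [walkWeight_cons]
    _ ≤ ENNReal.ofReal (w v u) + ENNReal.ofReal (walkWeight w q) := ENNReal.ofReal_add_le

end Aux

/-- Correctness of the approximate streaming Bellman-Ford: if the estimates `D p`
are sound (never smaller than the true `p`-bounded distance), vanish on `S`, and the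
update rule loses at most a factor `(1+ζ')` relative to the best neighbor on a shortest
`(p+1)`-bounded path, then after `p` rounds
`d^{(p)}(v,S) ≤ D p v ≤ (1+ζ')^p · d^{(p)}(v,S)` for every vertex `v`. -/
theorem stmt12 {V : Type*} [Fintype V] [DecidableEq V] (G : SimpleGraph V)
    (w : V → V → ℝ) (hsymm : ∀ a b, w a b = w b a)
    (hpos : ∀ a b, G.Adj a b → 0 < w a b) (S : Set V)
    (ζ' : ℝ) (hζ : 0 < ζ')
    (D : ℕ → V → ℝ≥0∞)
    (hS : ∀ p, ∀ s ∈ S, D p s = 0)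
    (hlow : ∀ p v, setBddDist G w S p v ≤ D p v)
    (hupd : ∀ p v u, G.Adj u v →
      setBddDist G w S (p + 1) v = setBddDist G w S p u + ENNReal.ofReal (w u v) →
      D p u ≤ ENNReal.ofReal ((1 + ζ') ^ p) * setBddDist G w S p u →
      D (p + 1) v ≤ ENNReal.ofReal (1 + ζ') * (D p u + ENNReal.ofReal (w u v))) :
    ∀ p v, setBddDist G w S p v ≤ D p v ∧
      D p v ≤ ENNReal.ofReal ((1 + ζ') ^ p) * setBddDist G w S p v := by
  intro p
  induction p with
  | zero =>
    intro v
    refine ⟨hlow 0 v, ?_⟩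
    by_cases hv : v ∈ S
    · rw [hS 0 v hv]; exact zero_le
    · have htop : setBddDist G w S 0 v = ⊤ := by
        rw [setBddDist]
        simp only [iInf_eq_top]
        intro s hs q hq
        exfalso
        cases q with
        | nil => exact hv hs
        | cons h q => simp at hq
      rw [htop]
      simp only [pow_zero, ENNReal.ofReal_one, one_mul]
      exact le_top
  | succ p ih =>
    intro v
    refine ⟨hlow _ v, ?_⟩
    by_cases htop : setBddDist G w S (p + 1) v = ⊤
    · rw [htop, ENNReal.mul_top (by positivity)]
      exact le_top
    · obtain ⟨s, hs, q, hq, hqw⟩ := setBddDist_exists_min w S htop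
      cases q with
      | nil =>
        rw [hS (p + 1) v hs]
        exact zero_le
      | @cons _ u _ h' q' =>
        have hq' : q'.length ≤ p := by simpa using hq
        have h1 : setBddDist G w S p u ≤ ENNReal.ofReal (walkWeight w q') :=
          setBddDist_le w S hs q' hq'
        have h2 : setBddDist G w S (p + 1) v ≤
            ENNReal.ofReal (w v u) + setBddDist G w S p u := setBddDist_le_add w S h'
        have h3 : ENNReal.ofReal (w v u) + setBddDist G w S p u ≤
            setBddDist G w S (p + 1) v := by
          rw [← hqw, walkWeight_cons,
            ENNReal.ofReal_add (hpos _ _ h').le (walkWeight_nonneg w hpos q')]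
          exact add_le_add le_rfl h1
        have heq : setBddDist G w S (p + 1) v =
            setBddDist G w S p u + ENNReal.ofReal (w u v) := by
          rw [hsymm u v, add_comm (setBddDist G w S p u)]
          exact le_antisymm h2 h3
        have hup := hupd p v u h'.symm heq (ih u).2
        have hone : (1 : ℝ≥0∞) ≤ ENNReal.ofReal ((1 + ζ') ^ p) := by
          rw [← ENNReal.ofReal_one]
          exact ENNReal.ofReal_le_ofReal (one_le_pow₀ (by linarith))
        calc D (p + 1) v
            ≤ ENNReal.ofReal (1 + ζ') * (D p u + ENNReal.ofReal (w u v)) := hup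
          _ ≤ ENNReal.ofReal (1 + ζ') *
              (ENNReal.ofReal ((1 + ζ') ^ p) * setBddDist G w S p u +
                ENNReal.ofReal ((1 + ζ') ^ p) * ENNReal.ofReal (w u v)) := by
              gcongr
              · exact (ih u).2
              · exact le_mul_of_one_le_left zero_le hone
          _ = ENNReal.ofReal ((1 + ζ') ^ (p + 1)) * setBddDist G w S (p + 1) v := by
              rw [← mul_add, heq, ← mul_assoc, ← ENNReal.ofReal_mul (by linarith),
                ← pow_succ']
end

section
/- Let s, t ≥ 1 and let s₁ ≥ s₂ ≥ ... ≥ s_t ≥ 1 be positive integers with s = ∑_{j=1}^t s_j. If each quantity f(s_j) satisfies f(s_j) ≤ s_j · log₂ s_j, then ∑_{j=2}^t s_j + ∑_{j=1}^t s_j · log₂ s_j ≤ s · log₂ s. In particular, when t ≥ 2: s₁ log₂ s₁ + ∑_{j=2}^t s_j log₂(2 s_j) ≤ s₁ log₂(s₁ + s₂) + ∑_{j=2}^t s_j log₂(s₁ + s_j) ≤ s log₂ s. -/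
open Finset

/-- The key arithmetic inequality behind the `n log n` bound on star edges: for
positive integers `s₀ ≥ s₁ ≥ … ≥ s_t` with sum `s`,
`∑_{j≥1} s_j + ∑_j s_j log₂ s_j ≤ s log₂ s`, via the chain
`s₀ log₂ s₀ + ∑_{j≥1} s_j log₂(2 s_j) ≤ s₀ log₂(s₀+s₁) + ∑_{j≥1} s_j log₂(s₀+s_j) ≤ s log₂ s`. -/
theorem stmt14 (t : ℕ) (s : Fin (t + 1) → ℕ) (hpos : ∀ j, 1 ≤ s j)
    (hsorted : ∀ i j : Fin (t + 1), i ≤ j → s j ≤ s i) :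
    ((∑ j ∈ Finset.univ.erase 0, (s j : ℝ)) + ∑ j, (s j : ℝ) * Real.logb 2 (s j)
      ≤ (∑ j, (s j : ℝ)) * Real.logb 2 (∑ j, (s j : ℝ))) ∧
    (1 ≤ t →
      ((s 0 : ℝ) * Real.logb 2 (s 0)
          + ∑ j ∈ Finset.univ.erase 0, (s j : ℝ) * Real.logb 2 (2 * (s j : ℝ))
        ≤ (s 0 : ℝ) * Real.logb 2 ((s 0 : ℝ) + (s 1 : ℝ))
          + ∑ j ∈ Finset.univ.erase 0, (s j : ℝ) * Real.logb 2 ((s 0 : ℝ) + (s j : ℝ))) ∧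
      ((s 0 : ℝ) * Real.logb 2 ((s 0 : ℝ) + (s 1 : ℝ))
          + ∑ j ∈ Finset.univ.erase 0, (s j : ℝ) * Real.logb 2 ((s 0 : ℝ) + (s j : ℝ))
        ≤ (∑ j, (s j : ℝ)) * Real.logb 2 (∑ j, (s j : ℝ)))) := by
  have h2 : (1:ℝ) < 2 := one_lt_two
  set S : ℝ := ∑ j, (s j : ℝ) with hS
  have hposR : ∀ j, (1:ℝ) ≤ (s j : ℝ) := fun j => by exact_mod_cast hpos j
  have hN : ∀ j : Fin (t+1), j ≠ 0 → (s 0 : ℝ) + (s j : ℝ) ≤ S := by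
    intro j hj
    have h1 : s 0 + s j ≤ ∑ i, s i := by
      rw [← Finset.add_sum_erase _ s (Finset.mem_univ 0)]
      exact Nat.add_le_add_left (Finset.single_le_sum (fun i _ => Nat.zero_le _)
        (Finset.mem_erase.2 ⟨hj, Finset.mem_univ j⟩)) _
    calc (s 0 : ℝ) + (s j : ℝ) = ((s 0 + s j : ℕ) : ℝ) := by push_cast; ring
      _ ≤ ((∑ i, s i : ℕ) : ℝ) := by exact_mod_cast h1
      _ = S := by rw [hS]; push_cast; rfl
  have hs0S : (s 0 : ℝ) ≤ S :=
    Finset.single_le_sum (f := fun j => (s j : ℝ)) (fun i _ => by positivity)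
      (Finset.mem_univ 0)
  have hmono : ∀ a b : ℝ, 0 < a → a ≤ b → Real.logb 2 a ≤ Real.logb 2 b :=
    fun a b ha hab => Real.logb_le_logb_of_le h2 ha hab
  have hRHS : S * Real.logb 2 S
      = (s 0:ℝ) * Real.logb 2 S + ∑ j ∈ Finset.univ.erase 0, (s j:ℝ) * Real.logb 2 S := by
    conv_lhs => rw [hS]
    rw [Finset.sum_mul, ← Finset.add_sum_erase _ _ (Finset.mem_univ 0)]
  have hlog2 : ∀ j : Fin (t+1),
      Real.logb 2 (2 * (s j : ℝ)) = 1 + Real.logb 2 (s j : ℝ) := by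
    intro j
    rw [Real.logb_mul (by norm_num) (by have := hposR j; linarith)]
    simp
  constructor
  · -- part 1
    have hsplit : ∑ j, (s j:ℝ) * Real.logb 2 (s j)
        = (s 0:ℝ) * Real.logb 2 (s 0)
          + ∑ j ∈ Finset.univ.erase 0, (s j:ℝ) * Real.logb 2 (s j) :=
      (Finset.add_sum_erase _ _ (Finset.mem_univ 0)).symm
    rw [hsplit, hRHS]
    have key : ∀ j ∈ Finset.univ.erase 0,
        (s j:ℝ) + (s j:ℝ) * Real.logb 2 (s j) ≤ (s j:ℝ) * Real.logb 2 S := by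
      intro j hj
      have hj0 : j ≠ 0 := (Finset.mem_erase.1 hj).1
      have hsj0 : (s j:ℝ) ≤ (s 0:ℝ) := by exact_mod_cast hsorted 0 j (Fin.zero_le j)
      have h2s : 2 * (s j:ℝ) ≤ S := le_trans (by linarith) (hN j hj0)
      have := mul_le_mul_of_nonneg_left
        (hmono _ _ (by have := hposR j; linarith) h2s)
        (show (0:ℝ) ≤ (s j:ℝ) by have := hposR j; linarith)
      rw [hlog2 j, mul_add, mul_one] at this
      linarith
    have hsum := Finset.sum_le_sum key
    rw [Finset.sum_add_distrib] at hsum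
    have h0 : (s 0:ℝ) * Real.logb 2 (s 0) ≤ (s 0:ℝ) * Real.logb 2 S :=
      mul_le_mul_of_nonneg_left (hmono _ _ (by have := hposR 0; linarith) hs0S)
        (by have := hposR 0; linarith)
    linarith
  · intro ht
    have hne1 : (1 : Fin (t+1)) ≠ 0 := by
      simp [Fin.ext_iff, Fin.val_one', Nat.mod_eq_of_lt (by omega : 1 < t + 1)]
    constructor
    · -- part 2a
      have h0 : (s 0:ℝ) * Real.logb 2 (s 0)
          ≤ (s 0:ℝ) * Real.logb 2 ((s 0:ℝ) + (s 1:ℝ)) :=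
        mul_le_mul_of_nonneg_left
          (hmono _ _ (by have := hposR 0; linarith)
            (by have := hposR 1; linarith))
          (by have := hposR 0; linarith)
      have key : ∀ j ∈ Finset.univ.erase 0,
          (s j:ℝ) * Real.logb 2 (2 * (s j:ℝ))
            ≤ (s j:ℝ) * Real.logb 2 ((s 0:ℝ) + (s j:ℝ)) := by
        intro j hj
        have hsj0 : (s j:ℝ) ≤ (s 0:ℝ) := by exact_mod_cast hsorted 0 j (Fin.zero_le j)
        exact mul_le_mul_of_nonneg_left
          (hmono _ _ (by have := hposR j; linarith) (by linarith))
          (by have := hposR j; linarith)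
      exact add_le_add h0 (Finset.sum_le_sum key)
    · -- part 2b
      rw [hRHS]
      have h0 : (s 0:ℝ) * Real.logb 2 ((s 0:ℝ) + (s 1:ℝ)) ≤ (s 0:ℝ) * Real.logb 2 S :=
        mul_le_mul_of_nonneg_left
          (hmono _ _ (by have := hposR 0; have := hposR 1; linarith) (hN 1 hne1))
          (by have := hposR 0; linarith)
      have key : ∀ j ∈ Finset.univ.erase 0,
          (s j:ℝ) * Real.logb 2 ((s 0:ℝ) + (s j:ℝ)) ≤ (s j:ℝ) * Real.logb 2 S := by
        intro j hj
        have hj0 : j ≠ 0 := (Finset.mem_erase.1 hj).1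
        exact mul_le_mul_of_nonneg_left
          (hmono _ _ (by have := hposR 0; have := hposR j; linarith) (hN j hj0))
          (by have := hposR j; linarith)
      exact add_le_add h0 (Finset.sum_le_sum key)
end
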